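/- In the deformed GL_{h,g}(2) algebra defined by the RTT relation R̄ T₁ T₂ = T₂ T₁ R̄ with T = [[a,b],[c,d]], the element det T := ad − bc − (h+g)ac satisfies [c, det T] = 0. -/

import Mathlib

open Matrix Kronecker

open Fin.NatCast in
/-- R̄(h,g) with entries in an algebra A, as an operator on A²⊗A² via the
identification e₁=(0,0), e₂=(0,1), e₃=(1,0), e₄=(1,1). -/
def RbarA {k A : Type*} [CommRing k] [Ring A] [Algebra k A] (h g : k) :
    Matrix (Fin 2 × Fin 2) (Fin 2 × Fin 2) A :=
  fun p q =>
    algebraMap k A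
      ((!![1, h+g, -h-g, h^2-g^2;
           0, 1,   0,    h-g;
           0, 0,   1,    -h+g;
           0, 0,   0,    1] : Matrix (Fin 4) (Fin 4) k)
        (2 * p.1 + p.2 : Fin 4) (2 * q.1 + q.2 : Fin 4))

/-- T₁ = T⊗I₂ for T a 2×2 matrix with (possibly noncommuting) entries. -/
def T1 {A : Type*} [Ring A] (T : Matrix (Fin 2) (Fin 2) A) :
    Matrix (Fin 2 × Fin 2) (Fin 2 × Fin 2) A :=
  T ⊗ₖ (1 : Matrix (Fin 2) (Fin 2) A)

/-- T₂ = I₂⊗T for T a 2×2 matrix with (possibly noncommuting) entries. -/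
def T2 {A : Type*} [Ring A] (T : Matrix (Fin 2) (Fin 2) A) :
    Matrix (Fin 2 × Fin 2) (Fin 2 × Fin 2) A :=
  (1 : Matrix (Fin 2) (Fin 2) A) ⊗ₖ T

/-- In GL_{h,g}(2), defined by the RTT relation R̄T₁T₂ = T₂T₁R̄ with
T = [[a,b],[c,d]], the quantum determinant det T = ad − bc − (h+g)ac
satisfies [c, det T] = 0. -/
theorem detT_commutes_c (k A : Type*) [CommRing k] [Ring A] [Algebra k A]
    (h g : k) (a b c d : A)
    (hRTT : RbarA h g * (T1 !![a, b; c, d] * T2 !![a, b; c, d]) =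
            (T2 !![a, b; c, d] * T1 !![a, b; c, d]) * RbarA h g) :
    c * (a * d - b * c - algebraMap k A (h + g) * (a * c)) =
      (a * d - b * c - algebraMap k A (h + g) * (a * c)) * c := by
  have e1 := congr_fun (congr_fun hRTT ((0:Fin 2),(1:Fin 2))) ((0:Fin 2),(0:Fin 2))
  have e3 := congr_fun (congr_fun hRTT ((0:Fin 2),(1:Fin 2))) ((1:Fin 2),(0:Fin 2))
  have e4 := congr_fun (congr_fun hRTT ((1:Fin 2),(1:Fin 2))) ((0:Fin 2),(1:Fin 2))
  open Fin.NatCast in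
  have cf1 : ((1 : Fin 2) : Fin 4) = 1 := by decide
  open Fin.NatCast in
  have cf0 : ((0 : Fin 2) : Fin 4) = 0 := by decide
  simp [RbarA, T1, T2, Matrix.mul_apply, Matrix.kroneckerMap_apply, Fintype.sum_prod_type,
    Fin.sum_univ_succ, Matrix.one_apply, Matrix.vecHead, Matrix.vecTail,
    cf1, cf0] at e1 e3 e4
  rw [map_add]
  set X := algebraMap k A h with hX
  set Y := algebraMap k A g with hY
  have cα : ∀ x : A, x * (X+Y) = (X+Y) * x := fun x => by
    rw [mul_add, add_mul, hX, hY, Algebra.commutes, Algebra.commutes]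
  have hβα : (X-Y) * (X+Y) = (X+Y) * (X-Y) := by
    rw [hX, hY, ← map_sub, ← map_add, Algebra.commutes]
  have r1 : c*a = a*c + (X-Y)*(c*c) := e1.symm
  have r3 : c*b = b*c + (X-Y)*(d*c) + (X+Y)*(c*a) := by
    linear_combination (norm := noncomm_ring) -e3 + cα (c*a)
  have r4 : c*d = d*c + (X+Y)*(c*c) := by
    linear_combination (norm := noncomm_ring) e4 + cα (c*c)
  linear_combination (norm := noncomm_ring) r1 * d - r3 * c - (cα c) * (a*c) + a * r4
    + ((X-Y)*c) * r4 - 2*((X+Y) * r1 * c) + (cα a) * (c*c) + (X-Y) * r4 * c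
    + (X-Y) * (cα c) * (c*c) + 2 * (hβα * (c*c*c))
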